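/- Let X₁, X₂ and Y be Banach spaces, let X = X₁ ⊕_∞ X₂, and let T : X → Y be a bounded linear operator with restrictions T₁ and T₂. If T₁ and T₂ are strong Daugavet operators, then T is a strong Daugavet operator. -/

import Mathlib

/-- A bounded linear operator `T : X → Y` is a *strong Daugavet operator* if for every
`x, y` in the unit sphere of `X` and every `ε > 0` there is `z` in the unit sphere with
`‖x + z‖ ≥ 2 - ε` and `‖T (y - z)‖ ≤ ε`. -/
def IsStrongDaugavet {X Y : Type*} [NormedAddCommGroup X] [NormedSpace ℝ X]
    [NormedAddCommGroup Y] [NormedSpace ℝ Y] (T : X →L[ℝ] Y) : Prop :=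
  ∀ x y : X, ‖x‖ = 1 → ‖y‖ = 1 → ∀ ε : ℝ, 0 < ε →
    ∃ z : X, ‖z‖ = 1 ∧ 2 - ε ≤ ‖x + z‖ ∧ ‖T (y - z)‖ ≤ ε

lemma exists_convex_decomp {X : Type*} [NormedAddCommGroup X] [NormedSpace ℝ X]
    (x y : X) (hx : ‖x‖ = 1) (hy : ‖y‖ ≤ 1) :
    ∃ u w : X, ∃ l : ℝ, ‖u‖ = 1 ∧ ‖w‖ = 1 ∧ 0 ≤ l ∧ l ≤ 1 ∧ y = l • u + (1 - l) • w := by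
  have hcont : Continuous fun t : ℝ => ‖y + t • x‖ := by continuity
  have hcont' : Continuous fun t : ℝ => ‖y - t • x‖ := by continuity
  have h2x : ‖(2:ℝ) • x‖ = 2 := by simp [norm_smul, hx]
  have hb1 : (1:ℝ) ≤ ‖y + (2:ℝ) • x‖ := by
    have h := norm_sub_le (y + (2:ℝ) • x) y
    have : (y + (2:ℝ) • x) - y = (2:ℝ) • x := by abel
    rw [this, h2x] at h
    linarith
  have hb2 : (1:ℝ) ≤ ‖y - (2:ℝ) • x‖ := by
    have h := norm_sub_le y (y - (2:ℝ) • x)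
    have : y - (y - (2:ℝ) • x) = (2:ℝ) • x := by abel
    rw [this, h2x] at h
    linarith
  have h2 : (1:ℝ) ∈ Set.Icc ‖y + (0:ℝ) • x‖ ‖y + (2:ℝ) • x‖ := ⟨by simpa using hy, hb1⟩
  have h3 : (1:ℝ) ∈ Set.Icc ‖y - (0:ℝ) • x‖ ‖y - (2:ℝ) • x‖ := ⟨by simpa using hy, hb2⟩
  obtain ⟨a, ha, hae⟩ := intermediate_value_Icc (by norm_num : (0:ℝ) ≤ 2) hcont.continuousOn h2
  obtain ⟨b, hb, hbe⟩ := intermediate_value_Icc (by norm_num : (0:ℝ) ≤ 2) hcont'.continuousOn h3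
  simp only at hae hbe
  rcases eq_or_lt_of_le (by nlinarith [ha.1, hb.1] : (0:ℝ) ≤ a + b) with h0 | h0
  · have ha0 : a = 0 := by nlinarith [ha.1, hb.1]
    refine ⟨y, y, 1/2, ?_, ?_, by norm_num, by norm_num, by module⟩
    · simpa [ha0] using hae
    · simpa [ha0] using hae
  · set l := b / (a + b) with hl
    have hab : a + b ≠ 0 := ne_of_gt h0
    refine ⟨y + a • x, y - b • x, l, hae, hbe, div_nonneg hb.1 h0.le,
      div_le_one_of_le₀ (by linarith [ha.1]) h0.le, ?_⟩
    have key : l * a - (1 - l) * b = 0 := by rw [hl]; field_simp; ring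
    have : l • (y + a • x) + (1 - l) • (y - b • x)
        = (l + (1 - l)) • y + (l * a - (1 - l) * b) • x := by module
    rw [this, key]
    simp

/-- Ball version of the strong Daugavet property. -/
lemma isStrongDaugavet_ball {X Y : Type*} [NormedAddCommGroup X] [NormedSpace ℝ X]
    [NormedAddCommGroup Y] [NormedSpace ℝ Y] (T : X →L[ℝ] Y) (hT : IsStrongDaugavet T)
    (x y : X) (hx : ‖x‖ = 1) (hy : ‖y‖ ≤ 1) (ε : ℝ) (hε : 0 < ε) :
    ∃ z : X, ‖z‖ ≤ 1 ∧ 2 - ε ≤ ‖x + z‖ ∧ ‖T (y - z)‖ ≤ ε := by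
  set δ : ℝ := min (ε / 6) (1 / 2) with hδdef
  have hδpos : 0 < δ := lt_min (by linarith) (by norm_num)
  have hδ1 : δ ≤ 1 / 2 := min_le_right _ _
  have hδε : 6 * δ ≤ ε := by
    have := min_le_left (ε / 6) (1 / 2)
    simp only [← hδdef] at this; linarith
  obtain ⟨u, w, l, hu, hw, hl0, hl1, hyuw⟩ := exists_convex_decomp x y hx hy
  obtain ⟨zu, hzu, hxzu, hTu⟩ := hT x u hx hu δ hδpos
  have hxzu_pos : 0 < ‖x + zu‖ := by linarith
  set s : X := ‖x + zu‖⁻¹ • (x + zu) with hs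
  have hsnorm : ‖s‖ = 1 := by
    rw [hs, norm_smul, norm_inv, Real.norm_eq_abs, abs_of_pos hxzu_pos,
      inv_mul_cancel₀ (ne_of_gt hxzu_pos)]
  obtain ⟨zw, hzw, hszw, hTw⟩ := hT s w hsnorm hw δ hδpos
  set z : X := l • zu + (1 - l) • zw with hz
  have hznorm : ‖z‖ ≤ 1 := by
    calc ‖z‖ ≤ ‖l • zu‖ + ‖(1 - l) • zw‖ := norm_add_le _ _
    _ = l * 1 + (1 - l) * 1 := by
        rw [norm_smul, norm_smul, hzu, hzw, Real.norm_eq_abs, Real.norm_eq_abs,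
          abs_of_nonneg hl0, abs_of_nonneg (by linarith)]
    _ = 1 := by ring
  have hszw_ne : s + zw ≠ 0 := by
    intro h
    have : ‖s + zw‖ = 0 := by rw [h, norm_zero]
    linarith
  obtain ⟨f, hf1, hfval⟩ := exists_dual_vector ℝ (s + zw) (norm_ne_zero_iff.mpr hszw_ne)
  -- bounds from f
  have hfle : ∀ v : X, f v ≤ ‖v‖ := by
    intro v
    calc f v ≤ ‖f v‖ := le_abs_self _
    _ ≤ ‖f‖ * ‖v‖ := f.le_opNorm v
    _ = ‖v‖ := by rw [hf1, one_mul]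
  have hsum : f s + f zw = ‖s + zw‖ := by
    have := hfval
    simp only [map_add] at this
    exact_mod_cast this
  have hfs : 1 - δ ≤ f s := by
    have h1 := hfle zw
    rw [hzw] at h1
    linarith
  have hfzw : 1 - δ ≤ f zw := by
    have h1 := hfle s
    rw [hsnorm] at h1
    linarith
  have hfxzu : 2 - 3 * δ ≤ f (x + zu) := by
    have : f (x + zu) = ‖x + zu‖ * f s := by
      rw [hs, map_smul, smul_eq_mul]
      field_simp
    rw [this]
    nlinarith [hfle (x + zu)]
  have hfx : 1 - 3 * δ ≤ f x := by
    have h1 := hfle zu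
    rw [hzu] at h1
    have : f (x + zu) = f x + f zu := by simp
    linarith
  have hfzu : 1 - 3 * δ ≤ f zu := by
    have h1 := hfle x
    rw [hx] at h1
    have : f (x + zu) = f x + f zu := by simp
    linarith
  refine ⟨z, hznorm, ?_, ?_⟩
  · have hfz : f (x + z) = f x + (l * f zu + (1 - l) * f zw) := by
      rw [hz]; simp [mul_comm]
    have h1 : l * (1 - 3 * δ) ≤ l * f zu := mul_le_mul_of_nonneg_left hfzu hl0
    have h2 : (1 - l) * (1 - δ) ≤ (1 - l) * f zw :=
      mul_le_mul_of_nonneg_left hfzw (by linarith)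
    have h3 : l * δ ≤ 1 * δ := mul_le_mul_of_nonneg_right hl1 hδpos.le
    have e1 : l * (1 - 3 * δ) = l - 3 * (l * δ) := by ring
    have e2 : (1 - l) * (1 - δ) = 1 - δ - l + l * δ := by ring
    have : 2 - 6 * δ ≤ f (x + z) := by
      rw [hfz]
      linarith [h1, h2, h3, hfx]
    calc 2 - ε ≤ 2 - 6 * δ := by linarith
    _ ≤ f (x + z) := this
    _ ≤ ‖x + z‖ := hfle _
  · have hy' : y - z = l • (u - zu) + (1 - l) • (w - zw) := by
      rw [hyuw, hz]; module
    calc ‖T (y - z)‖ = ‖l • T (u - zu) + (1 - l) • T (w - zw)‖ := by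
          rw [hy']; simp
    _ ≤ ‖l • T (u - zu)‖ + ‖(1 - l) • T (w - zw)‖ := norm_add_le _ _
    _ = l * ‖T (u - zu)‖ + (1 - l) * ‖T (w - zw)‖ := by
          rw [norm_smul, norm_smul, Real.norm_eq_abs, Real.norm_eq_abs,
            abs_of_nonneg hl0, abs_of_nonneg (by linarith)]
    _ ≤ l * δ + (1 - l) * δ := by
          have := mul_le_mul_of_nonneg_left hTu hl0
          have := mul_le_mul_of_nonneg_left hTw (by linarith : (0:ℝ) ≤ 1 - l)
          linarith
    _ = δ := by ring
    _ ≤ ε := by linarith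

theorem strongDaugavet_of_restrictions_inftySum
    {X₁ X₂ Y : Type*}
    [NormedAddCommGroup X₁] [NormedSpace ℝ X₁] [CompleteSpace X₁]
    [NormedAddCommGroup X₂] [NormedSpace ℝ X₂] [CompleteSpace X₂]
    [NormedAddCommGroup Y] [NormedSpace ℝ Y] [CompleteSpace Y]
    (T : WithLp ⊤ (X₁ × X₂) →L[ℝ] Y)
    (T₁ : X₁ →L[ℝ] Y) (T₂ : X₂ →L[ℝ] Y)
    (hT₁ : ∀ x₁ : X₁, T₁ x₁ = T ((WithLp.prodContinuousLinearEquiv ⊤ ℝ X₁ X₂).symm (x₁, 0)))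
    (hT₂ : ∀ x₂ : X₂, T₂ x₂ = T ((WithLp.prodContinuousLinearEquiv ⊤ ℝ X₁ X₂).symm (0, x₂)))
    (h₁ : IsStrongDaugavet T₁) (h₂ : IsStrongDaugavet T₂) :
    IsStrongDaugavet T := by
  have hnorm : ∀ v : WithLp ⊤ (X₁ × X₂), ‖v‖ = max ‖v.fst‖ ‖v.snd‖ := by
    intro v
    exact WithLp.prod_norm_eq_sup v
  have hTspl : ∀ v : WithLp ⊤ (X₁ × X₂), T v = T₁ v.fst + T₂ v.snd := by
    intro v
    rw [hT₁, hT₂, ← map_add]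
    congr 1
    apply (WithLp.prodContinuousLinearEquiv ⊤ ℝ X₁ X₂).injective
    rw [map_add, ContinuousLinearEquiv.apply_symm_apply, ContinuousLinearEquiv.apply_symm_apply]
    apply Prod.ext <;> simp [WithLp.prodContinuousLinearEquiv, WithLp.ofLp_fst, WithLp.ofLp_snd] <;> rfl
  intro x y hx hy ε hε
  rw [hnorm] at hx hy
  have ha1 : ‖x.fst‖ ≤ 1 := le_of_le_of_eq (le_max_left _ _) hx
  have ha2 : ‖x.snd‖ ≤ 1 := le_of_le_of_eq (le_max_right _ _) hx
  have hb1 : ‖y.fst‖ ≤ 1 := le_of_le_of_eq (le_max_left _ _) hy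
  have hb2 : ‖y.snd‖ ≤ 1 := le_of_le_of_eq (le_max_right _ _) hy
  have hxor : ‖x.fst‖ = 1 ∨ ‖x.snd‖ = 1 := by
    rcases max_choice ‖x.fst‖ ‖x.snd‖ with h | h
    · exact Or.inl (h ▸ hx)
    · exact Or.inr (h ▸ hx)
  have hyor : ‖y.fst‖ = 1 ∨ ‖y.snd‖ = 1 := by
    rcases max_choice ‖y.fst‖ ‖y.snd‖ with h | h
    · exact Or.inl (h ▸ hy)
    · exact Or.inr (h ▸ hy)
  have key : ∀ z₁ : X₁, ∀ z₂ : X₂, max ‖z₁‖ ‖z₂‖ = 1 →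
      2 - ε ≤ max ‖x.fst + z₁‖ ‖x.snd + z₂‖ →
      ‖T₁ (y.fst - z₁) + T₂ (y.snd - z₂)‖ ≤ ε →
      ∃ z : WithLp ⊤ (X₁ × X₂), ‖z‖ = 1 ∧ 2 - ε ≤ ‖x + z‖ ∧ ‖T (y - z)‖ ≤ ε := by
    intro z₁ z₂ hz hxz hTz
    refine ⟨(WithLp.prodContinuousLinearEquiv ⊤ ℝ X₁ X₂).symm (z₁, z₂), ?_, ?_, ?_⟩
    · rw [hnorm]; exact hz
    · rw [hnorm]; exact hxz
    · rw [hTspl]; exact hTz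
  rcases hxor with hax | hax
  · rcases hyor with hby | hby
    · obtain ⟨z₁, hz₁, hxz₁, hTz₁⟩ := h₁ x.fst y.fst hax hby ε hε
      refine key z₁ y.snd ?_ ?_ ?_
      · rw [hz₁, max_eq_left hb2]
      · exact le_max_of_le_left hxz₁
      · simpa using hTz₁
    · obtain ⟨z₁, hz₁, hxz₁, hTz₁⟩ := isStrongDaugavet_ball T₁ h₁ x.fst y.fst hax hb1
        (ε / 2) (by linarith)
      obtain ⟨z₂, hz₂, _, hTz₂⟩ := h₂ y.snd y.snd hby hby (ε / 2) (by linarith)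
      refine key z₁ z₂ ?_ ?_ ?_
      · rw [hz₂, max_eq_right hz₁]
      · refine le_max_of_le_left ?_; linarith
      · calc ‖T₁ (y.fst - z₁) + T₂ (y.snd - z₂)‖
            ≤ ‖T₁ (y.fst - z₁)‖ + ‖T₂ (y.snd - z₂)‖ := norm_add_le _ _
        _ ≤ ε := by linarith
  · rcases hyor with hby | hby
    · obtain ⟨z₂, hz₂, hxz₂, hTz₂⟩ := isStrongDaugavet_ball T₂ h₂ x.snd y.snd hax hb2
        (ε / 2) (by linarith)
      obtain ⟨z₁, hz₁, _, hTz₁⟩ := h₁ y.fst y.fst hby hby (ε / 2) (by linarith)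
      refine key z₁ z₂ ?_ ?_ ?_
      · rw [hz₁, max_eq_left hz₂]
      · refine le_max_of_le_right ?_; linarith
      · calc ‖T₁ (y.fst - z₁) + T₂ (y.snd - z₂)‖
            ≤ ‖T₁ (y.fst - z₁)‖ + ‖T₂ (y.snd - z₂)‖ := norm_add_le _ _
        _ ≤ ε := by linarith
    · obtain ⟨z₂, hz₂, hxz₂, hTz₂⟩ := h₂ x.snd y.snd hax hby ε hε
      refine key y.fst z₂ ?_ ?_ ?_
      · rw [hz₂, max_eq_right hb1]
      · exact le_max_of_le_right hxz₂
      · simpa using hTz₂
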